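/- The M-system is multi-dimensionally consistent in the following sense. Let i, k, l, m be indices with l ≠ m and l, m ∉ {i,k}, and let M^{ik}, M^{il}, M^{im}, M^{lk}, M^{mk}, M^{lm}, M^{ml}, M^{ll}, M^{mm} be complex numbers with M^{ll} ≠ 0, M^{mm} ≠ 0, M^{mm} − M^{ml}M^{lm}/M^{ll} ≠ 0 and M^{ll} − M^{lm}M^{ml}/M^{mm} ≠ 0. Define the shifted values in the direction l by X^{pq}_l = M^{pq} − M^{pl}M^{lq}/M^{ll} for all pairs (p,q) with l ∉ {p,q}, and analogously in the direction m. Then the two iterated updates agree: M^{ik}_l − M^{im}_l·M^{mk}_l/M^{mm}_l = M^{ik}_m − M^{il}_m·M^{lk}_m/M^{ll}_m, i.e. (M^{ik}_l)_m = (M^{ik}_m)_l. -/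
import Mathlib

/-- Multi-dimensional consistency of the M-system
`M^{ik}_l = M^{ik} − M^{il}M^{lk}/M^{ll}`: applying the shifts in the two
lattice directions `l` and `m` in either order yields the same value of `M^{ik}`,
i.e. `(M^{ik}_l)_m = (M^{ik}_m)_l`. -/
theorem Msystem_consistency (Mik Mil Mim Mlk Mmk Mlm Mml Mll Mmm : ℂ)
    (hll : Mll ≠ 0) (hmm : Mmm ≠ 0)
    (hmml : Mmm - Mml * Mlm / Mll ≠ 0)
    (hllm : Mll - Mlm * Mml / Mmm ≠ 0) :
    (Mik - Mil * Mlk / Mll) -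
        (Mim - Mil * Mlm / Mll) * (Mmk - Mml * Mlk / Mll) / (Mmm - Mml * Mlm / Mll)
      = (Mik - Mim * Mmk / Mmm) -
        (Mil - Mim * Mml / Mmm) * (Mlk - Mlm * Mmk / Mmm) / (Mll - Mlm * Mml / Mmm) := by
  have h1 : Mmm * Mll - Mml * Mlm ≠ 0 := by
    intro h; apply hmml; field_simp; linear_combination h
  have h2 : Mll * Mmm - Mlm * Mml ≠ 0 := by
    intro h; apply hllm; field_simp; linear_combination h
  have e1 : Mmm - Mml * Mlm / Mll = (Mmm * Mll - Mml * Mlm) / Mll := by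
    field_simp
  have e2 : Mll - Mlm * Mml / Mmm = (Mll * Mmm - Mlm * Mml) / Mmm := by
    field_simp
  rw [e1, e2, div_div_eq_mul_div, div_div_eq_mul_div]
  field_simp
  ring
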